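/- A sequence (x_n) in a Banach space X is (p,r)-null if and only if for every ε > 0 there exist (z_k) ∈ ℓ_p(X) and N ∈ ℕ such that ‖x_n‖ ≤ ε and x_n ∈ (p,r)-conv(z_k) for all n ≥ N. -/

import Mathlib

open Filter Topology Pointwise

noncomputable section

variable {X : Type*} [NormedAddCommGroup X] [NormedSpace ℝ X]

/-- The `(p,r)`-convex hull of a sequence `z`: all sums `∑ aₖ • zₖ` with `(aₖ)` in the
closed unit ball of `ℓ_r`. -/
def prConv (r : ℝ) (z : ℕ → X) : Set X :=
  {x | ∃ a : ℕ → ℝ, Summable (fun k => |a k| ^ r) ∧ (∑' k, |a k| ^ r) ≤ 1 ∧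
    HasSum (fun k => a k • z k) x}

/-- `z` is absolutely `p`-summable. -/
def MemLpSeq (p : ℝ) (z : ℕ → X) : Prop := Summable fun k => ‖z k‖ ^ p

/-- The `ℓ_p(X)` norm of a sequence. -/
def lpNorm (p : ℝ) (z : ℕ → X) : ℝ := (∑' k, ‖z k‖ ^ p) ^ (1 / p)

/-- `x` is a `(p,r)`-null sequence. -/
def IsPRNull (p r : ℝ) (x : ℕ → X) : Prop :=
  ∀ ε > 0, ∃ z : ℕ → X, MemLpSeq p z ∧ lpNorm p z ≤ ε ∧
    ∃ N : ℕ, ∀ n ≥ N, x n ∈ prConv r z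

/-- `z` is weakly `p`-summable with weak `ℓ_p` norm at most `C`. -/
def WeakLpBound (p : ℝ) (z : ℕ → X) (C : ℝ) : Prop :=
  ∀ f : X →L[ℝ] ℝ, ‖f‖ ≤ 1 →
    Summable (fun k => |f (z k)| ^ p) ∧ (∑' k, |f (z k)| ^ p) ≤ C ^ p

/-- `z` is weakly `p`-summable. -/
def MemWeakLpSeq (p : ℝ) (z : ℕ → X) : Prop := ∃ C, 0 ≤ C ∧ WeakLpBound p z C

/-- `z` is unconditionally `p`-summable: weakly `p`-summable with tails tending to `0`
in the weak `ℓ_p` norm. -/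
def MemUncondLpSeq (p : ℝ) (z : ℕ → X) : Prop :=
  MemWeakLpSeq p z ∧ ∀ ε > 0, ∃ N : ℕ, WeakLpBound p (fun k => z (k + N)) ε

section Aux

variable {p r : ℝ}

lemma lpNorm_nonneg (p : ℝ) (z : ℕ → X) : 0 ≤ lpNorm p z :=
  Real.rpow_nonneg (tsum_nonneg fun k => Real.rpow_nonneg (norm_nonneg _) p) _

lemma rpow_le_one_self {t : ℝ} (hr : 1 ≤ r) (ht : 0 ≤ t) (h : t ^ r ≤ 1) : t ≤ 1 := by
  by_contra hc
  push_neg at hc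
  have h2 : t ^ (1:ℝ) ≤ t ^ r := Real.rpow_le_rpow_of_exponent_le hc.le hr
  rw [Real.rpow_one] at h2
  linarith

lemma holder_key (hp : 1 ≤ p) (hr : 1 ≤ r) (hpr : 1 ≤ 1/p + 1/r)
    (z : ℕ → X) (hz : MemLpSeq p z) (a : ℕ → ℝ)
    (ha : Summable fun k => |a k| ^ r) (hac : (∑' k, |a k| ^ r) ≤ 1) :
    Summable (fun k => |a k| * ‖z k‖) ∧ (∑' k, |a k| * ‖z k‖) ≤ lpNorm p z := by
  have hp0 : (0:ℝ) < p := lt_of_lt_of_le one_pos hp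
  have hr0 : (0:ℝ) < r := lt_of_lt_of_le one_pos hr
  set T := ∑' k, ‖z k‖ ^ p with hT
  have hTnn : 0 ≤ T := tsum_nonneg fun k => Real.rpow_nonneg (norm_nonneg _) _
  rcases eq_or_lt_of_le hTnn with h0 | hTpos
  · have hz0 : ∀ k, |a k| * ‖z k‖ = 0 := by
      intro k
      have h1 : ‖z k‖ ^ p ≤ T := Summable.le_tsum hz k fun j _ => Real.rpow_nonneg (norm_nonneg _) _
      have h2 : ‖z k‖ ^ p = 0 := le_antisymm (h0 ▸ h1) (Real.rpow_nonneg (norm_nonneg _) _)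
      have h3 := (Real.rpow_eq_zero (norm_nonneg _) (ne_of_gt hp0)).1 h2
      simp [h3]
    have hfe : (fun k => |a k| * ‖z k‖) = fun _ => 0 := funext hz0
    rw [hfe]
    exact ⟨summable_zero, by rw [tsum_zero]; exact lpNorm_nonneg p z⟩
  · set S := T ^ (1/p) with hSdef
    have hlp : lpNorm p z = S := rfl
    have hSpos : 0 < S := Real.rpow_pos_of_pos hTpos _
    have hSp : S ^ p = T := by
      rw [hSdef, ← Real.rpow_mul hTnn, one_div_mul_cancel hp0.ne', Real.rpow_one]
    set w1 := 1 - 1/p with hw1def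
    have hw1 : 0 ≤ w1 := by
      have h1 : 1/p ≤ 1 := by
        rw [div_le_one hp0]; exact hp
      rw [hw1def]; linarith
    have hwsum : w1 + 1/p = 1 := by ring
    set g := fun k => S * (w1 * |a k| ^ r + (1/p) * (‖z k‖ ^ p / T)) with hg
    have hkey : ∀ k, |a k| * ‖z k‖ ≤ g k := by
      intro k
      have hq2 : (0:ℝ) ≤ ‖z k‖ ^ p / T := div_nonneg (Real.rpow_nonneg (norm_nonneg _) _) hTnn
      have htr1 : |a k| ^ r ≤ 1 :=
        le_trans (Summable.le_tsum ha k fun j _ => Real.rpow_nonneg (abs_nonneg _) _) hac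
      have ht1 : |a k| ≤ 1 := rpow_le_one_self hr (abs_nonneg _) htr1
      rcases eq_or_lt_of_le (abs_nonneg (a k)) with ht0 | htpos
      · rw [← ht0, zero_mul]
        exact mul_nonneg hSpos.le
          (add_nonneg (mul_nonneg hw1 (Real.rpow_nonneg (abs_nonneg _) _))
            (mul_nonneg (by positivity) hq2))
      · -- main inequality
        have hdiv : ‖z k‖ ^ p / T = (‖z k‖ / S) ^ p := by
          rw [Real.div_rpow (norm_nonneg _) hSpos.le, hSp]
        have hsnn : (0:ℝ) ≤ ‖z k‖ / S := div_nonneg (norm_nonneg _) hSpos.le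
        have hexp : r * w1 ≤ 1 := by
          have h1 : 1 - 1/p ≤ 1/r := by linarith
          have h2 := mul_le_mul_of_nonneg_left h1 hr0.le
          rw [mul_one_div, div_self hr0.ne'] at h2
          rw [hw1def]; linarith
        have e1 : |a k| ≤ (|a k| ^ r) ^ w1 := by
          rw [← Real.rpow_mul (abs_nonneg _)]
          calc |a k| = |a k| ^ (1:ℝ) := (Real.rpow_one _).symm
            _ ≤ |a k| ^ (r * w1) := Real.rpow_le_rpow_of_exponent_ge htpos ht1 hexp
        calc |a k| * ‖z k‖ = S * (|a k| * (‖z k‖ / S)) := by field_simp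
          _ ≤ S * ((|a k| ^ r) ^ w1 * (((‖z k‖ / S) ^ p) ^ (1/p))) := by
              apply mul_le_mul_of_nonneg_left _ hSpos.le
              have h2 : ((‖z k‖ / S) ^ p) ^ (1/p) = ‖z k‖ / S := by
                rw [← Real.rpow_mul hsnn, mul_one_div, div_self hp0.ne', Real.rpow_one]
              rw [h2]
              exact mul_le_mul_of_nonneg_right e1 hsnn
          _ ≤ S * (w1 * |a k| ^ r + (1/p) * ((‖z k‖ / S) ^ p)) := by
              apply mul_le_mul_of_nonneg_left _ hSpos.le
              exact Real.geom_mean_le_arith_mean2_weighted hw1 (by positivity)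
                (Real.rpow_nonneg (abs_nonneg _) _) (Real.rpow_nonneg hsnn _) hwsum
          _ = g k := by rw [hg]; simp only [hdiv]
    have hgsum : Summable g :=
      Summable.mul_left _ ((ha.mul_left w1).add ((Summable.div_const hz T).mul_left (1/p)))
    have hsum : Summable (fun k => |a k| * ‖z k‖) :=
      Summable.of_nonneg_of_le (fun k => by positivity) hkey hgsum
    refine ⟨hsum, ?_⟩
    have htg : ∑' k, g k = S * (w1 * (∑' k, |a k| ^ r) + (1/p) * (T / T)) := by
      rw [hg, tsum_mul_left]
      congr 1
      rw [Summable.tsum_add (ha.mul_left w1) ((Summable.div_const hz T).mul_left (1/p)),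
        tsum_mul_left, tsum_mul_left, tsum_div_const]
    have hle : ∑' k, |a k| * ‖z k‖ ≤ ∑' k, g k := Summable.tsum_le_tsum hkey hsum hgsum
    rw [htg, div_self hTpos.ne'] at hle
    have hAnn : 0 ≤ ∑' k, |a k| ^ r := tsum_nonneg fun k => Real.rpow_nonneg (abs_nonneg _) _
    rw [hlp]
    calc ∑' k, |a k| * ‖z k‖ ≤ S * (w1 * (∑' k, |a k| ^ r) + 1/p * 1) := hle
      _ ≤ S * (w1 * 1 + 1/p * 1) := by
          apply mul_le_mul_of_nonneg_left _ hSpos.le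
          exact add_le_add_left (mul_le_mul_of_nonneg_left hac hw1) _
      _ = S := by rw [hw1def]; ring

lemma summable_norm_smul (hp : 1 ≤ p) (hr : 1 ≤ r) (hpr : 1 ≤ 1/p + 1/r)
    {z : ℕ → X} (hz : MemLpSeq p z) {a : ℕ → ℝ}
    (ha : Summable fun k => |a k| ^ r) (hac : (∑' k, |a k| ^ r) ≤ 1) :
    Summable (fun k => ‖a k • z k‖) ∧ (∑' k, ‖a k • z k‖) ≤ lpNorm p z := by
  have h := holder_key hp hr hpr z hz a ha hac
  have he : (fun k => ‖a k • z k‖) = fun k => |a k| * ‖z k‖ := by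
    funext k; rw [norm_smul, Real.norm_eq_abs]
  rw [he]; exact h

lemma holder_scaled (hp : 1 ≤ p) (hr : 1 ≤ r) (hpr : 1 ≤ 1/p + 1/r)
    {z : ℕ → X} (hz : MemLpSeq p z) {a : ℕ → ℝ} {c : ℝ} (hc : 0 < c)
    (ha : Summable fun k => |a k| ^ r) (hac : (∑' k, |a k| ^ r) ≤ c ^ r) :
    Summable (fun k => ‖a k • z k‖) ∧ (∑' k, ‖a k • z k‖) ≤ c * lpNorm p z := by
  have hde : (fun k => |a k / c| ^ r) = fun k => |a k| ^ r / c ^ r := by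
    funext k; rw [abs_div, abs_of_pos hc, Real.div_rpow (abs_nonneg _) hc.le]
  have ha' : Summable fun k => |a k / c| ^ r := by rw [hde]; exact ha.div_const _
  have hac' : (∑' k, |a k / c| ^ r) ≤ 1 := by
    rw [hde, tsum_div_const, div_le_one (Real.rpow_pos_of_pos hc r)]; exact hac
  have key := summable_norm_smul hp hr hpr hz ha' hac'
  have he : (fun k => ‖a k • z k‖) = fun k => c * ‖(a k / c) • z k‖ := by
    funext k
    rw [norm_smul, norm_smul, Real.norm_eq_abs, Real.norm_eq_abs, abs_div, abs_of_pos hc]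
    field_simp
  constructor
  · rw [he]; exact key.1.mul_left c
  · rw [he, tsum_mul_left]
    calc c * ∑' k, ‖(a k / c) • z k‖ ≤ c * lpNorm p z :=
      mul_le_mul_of_nonneg_left key.2 hc.le

lemma norm_le_lpNorm (hp : 1 ≤ p) (hr : 1 ≤ r) (hpr : 1 ≤ 1/p + 1/r)
    {z : ℕ → X} (hz : MemLpSeq p z) {x : X} (hx : x ∈ prConv r z) : ‖x‖ ≤ lpNorm p z := by
  obtain ⟨a, ha, hac, hsum⟩ := hx
  have h := summable_norm_smul hp hr hpr hz ha hac
  calc ‖x‖ = ‖∑' k, a k • z k‖ := by rw [hsum.tsum_eq]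
    _ ≤ ∑' k, ‖a k • z k‖ := norm_tsum_le_tsum_norm h.1
    _ ≤ lpNorm p z := h.2

lemma exists_tail_small (hp : 1 ≤ p) {z : ℕ → X} (hz : MemLpSeq p z) {ε : ℝ} (hε : 0 < ε) :
    ∃ M : ℕ, MemLpSeq p (fun k => z (k + M)) ∧ lpNorm p (fun k => z (k + M)) ≤ ε := by
  have hp0 : (0:ℝ) < p := lt_of_lt_of_le one_pos hp
  have hεp : 0 < ε ^ p := Real.rpow_pos_of_pos hε p
  have ht := tendsto_sum_nat_add (fun k => ‖z k‖ ^ p)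
  obtain ⟨M, hM⟩ := (ht.eventually_le_const hεp).exists
  refine ⟨M, (summable_nat_add_iff M).2 hz, ?_⟩
  have h1 : lpNorm p (fun k => z (k + M)) ≤ (ε ^ p) ^ (1/p) :=
    Real.rpow_le_rpow (tsum_nonneg fun k => Real.rpow_nonneg (norm_nonneg _) _) hM
      (by positivity)
  rwa [← Real.rpow_mul hε.le, mul_one_div, div_self hp0.ne', Real.rpow_one] at h1

lemma tail_tsum_le {f : ℕ → ℝ} (hf : Summable f) (hnn : ∀ k, 0 ≤ f k) (M : ℕ) :
    (∑' k, f (k + M)) ≤ ∑' k, f k := by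
  have h := Summable.sum_add_tsum_nat_add M hf
  have h2 : 0 ≤ ∑ k ∈ Finset.range M, f k := Finset.sum_nonneg fun k _ => hnn k
  linarith

lemma abs_sub_rpow_le (hr : 1 ≤ r) (u v : ℝ) :
    |u - v| ^ r ≤ 2 ^ r * (|u| ^ r + |v| ^ r) := by
  have hr0 : (0:ℝ) < r := lt_of_lt_of_le one_pos hr
  have h1 : |u - v| ≤ 2 * max |u| |v| := by
    have := abs_sub u v
    have h2 := le_max_left |u| |v|
    have h3 := le_max_right |u| |v|
    linarith
  have h2 : |u - v| ^ r ≤ (2 * max |u| |v|) ^ r :=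
    Real.rpow_le_rpow (abs_nonneg _) h1 hr0.le
  have hmnn : (0:ℝ) ≤ max |u| |v| := le_trans (abs_nonneg u) (le_max_left _ _)
  have h3 : (2 * max |u| |v|) ^ r = 2 ^ r * (max |u| |v|) ^ r :=
    Real.mul_rpow (by norm_num) hmnn
  have h4 : (max |u| |v|) ^ r ≤ |u| ^ r + |v| ^ r := by
    rcases le_total |u| |v| with h | h
    · rw [max_eq_right h]
      have := Real.rpow_nonneg (abs_nonneg u) r
      linarith
    · rw [max_eq_left h]
      have := Real.rpow_nonneg (abs_nonneg v) r
      linarith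
  have h5 : (0:ℝ) ≤ 2 ^ r := Real.rpow_nonneg (by norm_num) r
  calc |u - v| ^ r ≤ 2 ^ r * (max |u| |v|) ^ r := by rw [← h3]; exact h2
    _ ≤ 2 ^ r * (|u| ^ r + |v| ^ r) := mul_le_mul_of_nonneg_left h4 h5

lemma diff_budget (hr : 1 ≤ r) {u v : ℕ → ℝ}
    (hu : Summable fun k => |u k| ^ r) (hv : Summable fun k => |v k| ^ r)
    (hu1 : (∑' k, |u k| ^ r) ≤ 1) (hv1 : (∑' k, |v k| ^ r) ≤ 1) :
    Summable (fun k => |u k - v k| ^ r) ∧ (∑' k, |u k - v k| ^ r) ≤ 4 ^ r := by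
  have h5 : (0:ℝ) ≤ 2 ^ r := Real.rpow_nonneg (by norm_num) r
  have hg : Summable (fun k => 2 ^ r * (|u k| ^ r + |v k| ^ r)) := (hu.add hv).mul_left _
  have hsum : Summable (fun k => |u k - v k| ^ r) :=
    Summable.of_nonneg_of_le (fun k => Real.rpow_nonneg (abs_nonneg _) _)
      (fun k => abs_sub_rpow_le hr _ _) hg
  refine ⟨hsum, ?_⟩
  have h24 : (2:ℝ) ^ r * 2 ≤ (4:ℝ) ^ r := by
    have h1 : (2:ℝ) ^ (1:ℝ) ≤ 2 ^ r := Real.rpow_le_rpow_of_exponent_le one_le_two hr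
    rw [Real.rpow_one] at h1
    have h2 : (4:ℝ) ^ r = 2 ^ r * 2 ^ r := by
      rw [← Real.mul_rpow (by norm_num) (by norm_num)]; norm_num
    rw [h2]
    nlinarith [h5]
  calc (∑' k, |u k - v k| ^ r) ≤ ∑' k, 2 ^ r * (|u k| ^ r + |v k| ^ r) :=
      Summable.tsum_le_tsum (fun k => abs_sub_rpow_le hr _ _) hsum hg
    _ = 2 ^ r * ((∑' k, |u k| ^ r) + ∑' k, |v k| ^ r) := by
      rw [tsum_mul_left, Summable.tsum_add hu hv]
    _ ≤ 2 ^ r * 2 := by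
      apply mul_le_mul_of_nonneg_left _ h5
      linarith
    _ ≤ 4 ^ r := h24

lemma key_claim [CompleteSpace X] (hp : 1 ≤ p) (hr : 1 ≤ r) (hpr : 1 ≤ 1/p + 1/r)
    {z : ℕ → X} (hz : MemLpSeq p z) {x : ℕ → X}
    (hnull : ∀ ε > 0, ∃ N, ∀ n ≥ N, ‖x n‖ ≤ ε)
    (hmem : ∀ n, x n ∈ prConv r z)
    {δ : ℝ} (hδ : 0 < δ) (M : ℕ) :
    ∃ N, ∀ n ≥ N, ∃ a : ℕ → ℝ, Summable (fun k => |a k| ^ r) ∧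
      (∑' k, |a k| ^ r) ≤ (4:ℝ) ^ r ∧ HasSum (fun k => a k • z k) (x n) ∧
      ∀ k < M, |a k| ≤ δ := by
  have hr0 : (0:ℝ) < r := lt_of_lt_of_le one_pos hr
  by_contra hcon
  push_neg at hcon
  have hfreq : ∃ᶠ n in atTop, ∀ a : ℕ → ℝ, Summable (fun k => |a k| ^ r) →
      (∑' k, |a k| ^ r) ≤ (4:ℝ) ^ r → HasSum (fun k => a k • z k) (x n) →
      ∃ k < M, δ < |a k| := by
    rw [frequently_atTop]
    intro N
    obtain ⟨n, hn, hbad⟩ := hcon N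
    exact ⟨n, hn, fun a h1 h2 h3 => hbad a h1 h2 h3⟩
  obtain ⟨φ, hφmono, hφP⟩ := Filter.extraction_of_frequently_atTop hfreq
  choose a ha1 ha2 ha3 using hmem
  have habs : ∀ n k, |a n k| ≤ 1 := fun n k =>
    rpow_le_one_self hr (abs_nonneg _)
      (le_trans (Summable.le_tsum (ha1 n) k fun j _ => Real.rpow_nonneg (abs_nonneg _) _) (ha2 n))
  set C : Set (ℕ → ℝ) := Set.univ.pi fun _ => Set.Icc (-1:ℝ) 1 with hCdef
  have hC : IsCompact C := isCompact_univ_pi fun _ => isCompact_Icc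
  have hmemC : ∀ j, (a (φ j)) ∈ C := by
    intro j
    rw [hCdef, Set.mem_univ_pi]
    intro k
    exact abs_le.1 (habs _ _)
  obtain ⟨L, _, ψ, hψmono, hψtend⟩ := hC.tendsto_subseq hmemC
  set nn : ℕ → ℕ := fun j => φ (ψ j) with hnn
  have hnmono : StrictMono nn := hφmono.comp hψmono
  have hpt : ∀ k, Tendsto (fun j => a (nn j) k) atTop (𝓝 (L k)) := fun k =>
    tendsto_pi_nhds.1 hψtend k
  -- ℓ_r facts about L
  have hLr_partial : ∀ F : Finset ℕ, (∑ k ∈ F, |L k| ^ r) ≤ 1 := by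
    intro F
    have htend : Tendsto (fun j => ∑ k ∈ F, |a (nn j) k| ^ r) atTop
        (𝓝 (∑ k ∈ F, |L k| ^ r)) := by
      apply tendsto_finset_sum
      intro k _
      have habs2 : Tendsto (fun j => |a (nn j) k|) atTop (𝓝 (|L k|)) :=
        (continuous_abs.tendsto _).comp (hpt k)
      exact ((Real.continuousAt_rpow_const _ r (Or.inr hr0.le)).tendsto).comp habs2
    refine le_of_tendsto htend (Filter.Eventually.of_forall fun j => ?_)
    exact le_trans
      (Summable.sum_le_tsum F (fun k _ => Real.rpow_nonneg (abs_nonneg _) _) (ha1 _)) (ha2 _)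
  have hLsum : Summable (fun k => |L k| ^ r) :=
    summable_of_sum_le (fun k => Real.rpow_nonneg (abs_nonneg _) _) hLr_partial
  have hLle : (∑' k, |L k| ^ r) ≤ 1 := Summable.tsum_le_of_sum_le hLsum hLr_partial
  -- difference budgets
  have hdbud : ∀ j, Summable (fun k => |a (nn j) k - L k| ^ r) ∧
      (∑' k, |a (nn j) k - L k| ^ r) ≤ (4:ℝ) ^ r := fun j =>
    diff_budget hr (ha1 _) hLsum (ha2 _) hLle
  have hdnorm : ∀ j, Summable (fun k => ‖(a (nn j) k - L k) • z k‖) := fun j =>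
    (holder_scaled hp hr hpr hz (by norm_num : (0:ℝ) < 4) (hdbud j).1 (hdbud j).2).1
  have hdsummable : ∀ j, Summable (fun k => (a (nn j) k - L k) • z k) := fun j =>
    Summable.of_norm (hdnorm j)
  -- L • z sums to 0
  have hLz : Summable (fun k => ‖L k • z k‖) := (summable_norm_smul hp hr hpr hz hLsum hLle).1
  have hLzsum : Summable (fun k => L k • z k) := Summable.of_norm hLz
  have hS0 : (∑' k, L k • z k) = 0 := by
    set S := ∑' k, L k • z k with hSdef
    have hkey : ∀ η > 0, ‖S‖ ≤ η := by
      intro η hη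
      obtain ⟨M', hzM', htail⟩ := exists_tail_small hp hz (show (0:ℝ) < η/8 by linarith)
      -- eventually small head and small x
      have hev1 : ∀ᶠ j in atTop, ∑ k ∈ Finset.range M', ‖(a (nn j) k - L k) • z k‖ ≤ η/4 := by
        have htendhead : Tendsto
            (fun j => ∑ k ∈ Finset.range M', ‖(a (nn j) k - L k) • z k‖) atTop (𝓝 0) := by
          have : ∀ k ∈ Finset.range M', Tendsto (fun j => ‖(a (nn j) k - L k) • z k‖)
              atTop (𝓝 0) := by
            intro k _
            have h1 : Tendsto (fun j => a (nn j) k - L k) atTop (𝓝 0) := by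
              have := (hpt k).sub (tendsto_const_nhds (x := L k))
              simpa using this
            have h2 : Tendsto (fun j => (a (nn j) k - L k) • z k) atTop (𝓝 ((0:ℝ) • z k)) :=
              h1.smul tendsto_const_nhds
            rw [zero_smul] at h2
            simpa [Function.comp_def] using (continuous_norm.tendsto (0:X)).comp h2
          have := tendsto_finset_sum (Finset.range M') this
          simpa using this
        exact htendhead.eventually_le_const (by linarith)
      obtain ⟨Nx, hNx⟩ := hnull (η/4) (by linarith)
      have hev2 : ∀ᶠ j in atTop, ‖x (nn j)‖ ≤ η/4 := by
        filter_upwards [eventually_ge_atTop Nx] with j hj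
        exact hNx _ (le_trans hj (hnmono.le_apply))
      obtain ⟨j, h1, h2⟩ := (hev1.and hev2).exists
      -- tail estimate
      have htb : (∑' k, ‖(a (nn j) (k + M') - L (k + M')) • z (k + M')‖) ≤ η/2 := by
        have hbudt : (∑' k, |a (nn j) (k + M') - L (k + M')| ^ r) ≤ (4:ℝ) ^ r :=
          le_trans (tail_tsum_le (hdbud j).1 (fun k => Real.rpow_nonneg (abs_nonneg _) _) M')
            (hdbud j).2
        have hsumt : Summable (fun k => |a (nn j) (k + M') - L (k + M')| ^ r) :=
          (summable_nat_add_iff M').2 (hdbud j).1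
        have := (holder_scaled hp hr hpr hzM' (by norm_num : (0:ℝ) < 4) hsumt hbudt).2
        calc (∑' k, ‖(a (nn j) (k + M') - L (k + M')) • z (k + M')‖)
            ≤ 4 * lpNorm p (fun k => z (k + M')) := this
          _ ≤ 4 * (η/8) := by
              exact mul_le_mul_of_nonneg_left htail (by norm_num)
          _ = η/2 := by ring
      have hsub : S - x (nn j) = ∑' k, (L k - a (nn j) k) • z k := by
        have hx : x (nn j) = ∑' k, a (nn j) k • z k := (ha3 (nn j)).tsum_eq.symm
        rw [hSdef, hx, ← Summable.tsum_sub hLzsum (ha3 (nn j)).summable]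
        congr 1
        funext k
        rw [sub_smul]
      have hLd : Summable (fun k => (L k - a (nn j) k) • z k) := by
        have he : (fun k => (L k - a (nn j) k) • z k)
            = fun k => -((a (nn j) k - L k) • z k) := by
          funext k; rw [← neg_smul, neg_sub]
        rw [he]
        exact (hdsummable j).neg
      have hnormsub : ‖S - x (nn j)‖ ≤ 3*η/4 := by
        rw [hsub]
        have hnrm : Summable (fun k => ‖(L k - a (nn j) k) • z k‖) := by
          have := hdnorm j
          have he : (fun k => ‖(L k - a (nn j) k) • z k‖)
              = fun k => ‖(a (nn j) k - L k) • z k‖ := by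
            funext k
            rw [← neg_sub (a (nn j) k) (L k), neg_smul, norm_neg]
          rw [he]; exact this
        calc ‖∑' k, (L k - a (nn j) k) • z k‖ ≤ ∑' k, ‖(L k - a (nn j) k) • z k‖ :=
            norm_tsum_le_tsum_norm hnrm
          _ = ∑' k, ‖(a (nn j) k - L k) • z k‖ := by
            congr 1
            funext k
            rw [← neg_sub (a (nn j) k) (L k), neg_smul, norm_neg]
          _ = (∑ k ∈ Finset.range M', ‖(a (nn j) k - L k) • z k‖)
              + ∑' k, ‖(a (nn j) (k + M') - L (k + M')) • z (k + M')‖ :=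
            (Summable.sum_add_tsum_nat_add M' (hdnorm j)).symm
          _ ≤ η/4 + η/2 := add_le_add h1 htb
          _ = 3*η/4 := by ring
      calc ‖S‖ ≤ ‖S - x (nn j)‖ + ‖x (nn j)‖ := by
            have := norm_add_le (S - x (nn j)) (x (nn j))
            simpa using this
        _ ≤ 3*η/4 + η/4 := add_le_add hnormsub h2
        _ = η := by ring
    by_contra hne
    have hpos : 0 < ‖S‖ := norm_pos_iff.2 hne
    have := hkey (‖S‖/2) (by linarith)
    linarith
  have hLhas : HasSum (fun k => L k • z k) 0 := hS0 ▸ hLzsum.hasSum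
  -- choose j with small head differences
  have hev : ∀ᶠ j in atTop, ∀ k ∈ Finset.range M, |a (nn j) k - L k| ≤ δ := by
    rw [eventually_all_finset]
    intro k _
    have h1 : Tendsto (fun j => |a (nn j) k - L k|) atTop (𝓝 0) := by
      have h0 : Tendsto (fun j => a (nn j) k - L k) atTop (𝓝 0) := by
        have := (hpt k).sub (tendsto_const_nhds (x := L k))
        simpa using this
      simpa [Function.comp_def] using (continuous_abs.tendsto (0:ℝ)).comp h0
    exact h1.eventually_le_const hδ
  obtain ⟨j, hj⟩ := hev.exists
  have hhas : HasSum (fun k => (a (nn j) k - L k) • z k) (x (nn j)) := by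
    have := (ha3 (nn j)).sub hLhas
    rw [sub_zero] at this
    have he : (fun k => (a (nn j) k - L k) • z k)
        = fun k => a (nn j) k • z k - L k • z k := by
      funext k; rw [sub_smul]
    rw [he]
    exact this
  obtain ⟨k, hkM, hk⟩ := hφP (ψ j) _ (hdbud j).1 (hdbud j).2 hhas
  exact absurd (hj k (Finset.mem_range.2 hkM)) (not_le.2 hk)

end Aux

theorem prNull_iff' [CompleteSpace X] (p r : ℝ) (hp : 1 ≤ p) (hr : 1 ≤ r)
    (hpr : 1 ≤ 1 / p + 1 / r) (x : ℕ → X) :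
    (∀ ε > 0, ∃ z : ℕ → X, MemLpSeq p z ∧ lpNorm p z ≤ ε ∧
      ∃ N : ℕ, ∀ n ≥ N, x n ∈ prConv r z) ↔
      ∀ ε > 0, ∃ z : ℕ → X, MemLpSeq p z ∧ ∃ N : ℕ, ∀ n ≥ N,
        ‖x n‖ ≤ ε ∧ x n ∈ prConv r z := by
  have hp0 : (0:ℝ) < p := lt_of_lt_of_le one_pos hp
  have hr0 : (0:ℝ) < r := lt_of_lt_of_le one_pos hr
  constructor
  · intro h ε hε
    obtain ⟨z, hz, hlp, N, hN⟩ := h ε hε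
    exact ⟨z, hz, N, fun n hn =>
      ⟨le_trans (norm_le_lpNorm hp hr hpr hz (hN n hn)) hlp, hN n hn⟩⟩
  · intro h ε hε
    have hnull0 : ∀ ε' > 0, ∃ N, ∀ n ≥ N, ‖x n‖ ≤ ε' := by
      intro ε' hε'
      obtain ⟨z, _, N, hN⟩ := h ε' hε'
      exact ⟨N, fun n hn => (hN n hn).1⟩
    obtain ⟨z, hz, N₁, hN₁⟩ := h 1 one_pos
    set x' : ℕ → X := fun n => x (n + N₁) with hx'
    have hmem' : ∀ n, x' n ∈ prConv r z := fun n => (hN₁ (n + N₁) (Nat.le_add_left _ _)).2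
    have hnull' : ∀ ε' > 0, ∃ N, ∀ n ≥ N, ‖x' n‖ ≤ ε' := by
      intro ε' hε'
      obtain ⟨N, hN⟩ := hnull0 ε' hε'
      exact ⟨N, fun n hn => hN (n + N₁) (le_trans hn (Nat.le_add_right _ _))⟩
    set T := ∑' k, ‖z k‖ ^ p with hT
    set L := lpNorm p z with hL
    have hLnn : 0 ≤ L := lpNorm_nonneg p z
    have hTnn : 0 ≤ T := tsum_nonneg fun k => Real.rpow_nonneg (norm_nonneg _) _
    have hLp : L ^ p = T := by
      rw [hL, lpNorm, ← hT, ← Real.rpow_mul hTnn, one_div_mul_cancel hp0.ne', Real.rpow_one]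
    obtain ⟨M, hzM, htail⟩ := exists_tail_small hp hz (show (0:ℝ) < ε/16 by linarith)
    set s : ℝ := ε / (2 * (L + 1)) with hs
    have hspos : 0 < s := by
      rw [hs]; positivity
    set c2 : ℝ := 2 * (M:ℝ) + 2 with hc2
    have hc2pos : (0:ℝ) < c2 := by rw [hc2]; positivity
    set δ : ℝ := s / c2 ^ (1/r) with hδdef
    have hc2pow : (0:ℝ) < c2 ^ (1/r) := Real.rpow_pos_of_pos hc2pos _
    have hδ : 0 < δ := by rw [hδdef]; positivity
    have hδs0 : δ / s = 1 / c2 ^ (1/r) := by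
      rw [hδdef, div_right_comm, div_self hspos.ne']
    have hc2rr : (c2 ^ (1/r)) ^ r = c2 := by
      rw [← Real.rpow_mul hc2pos.le, one_div_mul_cancel hr0.ne', Real.rpow_one]
    have hδs : (δ / s) ^ r = 1 / c2 := by
      rw [hδs0, Real.div_rpow (by norm_num) hc2pow.le, Real.one_rpow, hc2rr]
    obtain ⟨N₂, hN₂⟩ := key_claim hp hr hpr hz hnull' hmem' hδ M
    set w : ℕ → ℝ := fun k => if k < M then s else 8 with hw
    have hwpos : ∀ k, 0 < w k := by
      intro k; rw [hw]
      dsimp only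
      split
      · exact hspos
      · norm_num
    have hnormw : ∀ k, ‖w k • z k‖ ^ p = (w k) ^ p * ‖z k‖ ^ p := by
      intro k
      rw [norm_smul, Real.norm_eq_abs, abs_of_pos (hwpos k),
        Real.mul_rpow (hwpos k).le (norm_nonneg _)]
    have hwle : ∀ k, w k ≤ max s 8 := by
      intro k; rw [hw]
      dsimp only
      split
      · exact le_max_left _ _
      · exact le_max_right _ _
    have hmemz : MemLpSeq p (fun k => w k • z k) := by
      apply Summable.of_nonneg_of_le (fun k => Real.rpow_nonneg (norm_nonneg _) _)
        (fun k => ?_) (hz.mul_left ((max s 8) ^ p))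
      rw [hnormw k]
      exact mul_le_mul_of_nonneg_right
        (Real.rpow_le_rpow (hwpos k).le (hwle k) hp0.le)
        (Real.rpow_nonneg (norm_nonneg _) _)
    have hhead : (∑ k ∈ Finset.range M, ‖w k • z k‖ ^ p) ≤ (ε/2) ^ p := by
      have h1 : ∀ k ∈ Finset.range M, ‖w k • z k‖ ^ p = s ^ p * ‖z k‖ ^ p := by
        intro k hk
        rw [hnormw k, hw]
        simp [Finset.mem_range.1 hk]
      rw [Finset.sum_congr rfl h1, ← Finset.mul_sum]
      have hsL : s * L ≤ ε/2 := by
        rw [hs, div_mul_eq_mul_div, div_le_div_iff₀ (by positivity) (by norm_num)]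
        nlinarith
      calc s ^ p * ∑ k ∈ Finset.range M, ‖z k‖ ^ p
          ≤ s ^ p * T := mul_le_mul_of_nonneg_left
            (Summable.sum_le_tsum _ (fun k _ => Real.rpow_nonneg (norm_nonneg _) _) hz)
            (Real.rpow_nonneg hspos.le _)
        _ = (s * L) ^ p := by rw [Real.mul_rpow hspos.le hLnn, hLp]
        _ ≤ (ε/2) ^ p := Real.rpow_le_rpow (by positivity) hsL hp0.le
    have htail2 : (∑' k, ‖w (k+M) • z (k+M)‖ ^ p) ≤ (ε/2) ^ p := by
      have h1 : (fun k => ‖w (k+M) • z (k+M)‖ ^ p) = fun k => (8:ℝ)^p * ‖z (k+M)‖ ^ p := by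
        funext k
        rw [hnormw, hw]
        simp [Nat.not_lt.2 (Nat.le_add_left M k)]
      rw [h1, tsum_mul_left]
      have hTtnn : (0:ℝ) ≤ ∑' k, ‖z (k+M)‖ ^ p :=
        tsum_nonneg fun k => Real.rpow_nonneg (norm_nonneg _) _
      have hTt : (∑' k, ‖z (k+M)‖ ^ p) ≤ (ε/16) ^ p := by
        calc (∑' k, ‖z (k+M)‖ ^ p) = ((∑' k, ‖z (k+M)‖ ^ p) ^ (1/p)) ^ p := by
              rw [← Real.rpow_mul hTtnn, one_div_mul_cancel hp0.ne', Real.rpow_one]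
          _ ≤ (ε/16) ^ p := Real.rpow_le_rpow (Real.rpow_nonneg hTtnn _) htail hp0.le
      calc (8:ℝ) ^ p * ∑' k, ‖z (k+M)‖ ^ p ≤ 8 ^ p * (ε/16) ^ p :=
            mul_le_mul_of_nonneg_left hTt (Real.rpow_nonneg (by norm_num) _)
        _ = (ε/2) ^ p := by
            rw [← Real.mul_rpow (by norm_num) (by linarith : (0:ℝ) ≤ ε/16)]
            congr 1
            ring
    have hlpz : lpNorm p (fun k => w k • z k) ≤ ε := by
      have htot : (∑' k, ‖w k • z k‖ ^ p) ≤ 2 * (ε/2) ^ p := by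
        rw [← Summable.sum_add_tsum_nat_add M hmemz]
        calc (∑ k ∈ Finset.range M, ‖w k • z k‖ ^ p) + ∑' k, ‖w (k+M) • z (k+M)‖ ^ p
            ≤ (ε/2)^p + (ε/2)^p := add_le_add hhead htail2
          _ = 2 * (ε/2)^p := by ring
      have h2 : lpNorm p (fun k => w k • z k) ≤ (2 * (ε/2)^p) ^ (1/p) :=
        Real.rpow_le_rpow (tsum_nonneg fun k => Real.rpow_nonneg (norm_nonneg _) _)
          htot (by positivity)
      have h3 : ((2:ℝ) * (ε/2)^p) ^ (1/p) = 2 ^ (1/p) * (ε/2) := by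
        rw [Real.mul_rpow (by norm_num) (Real.rpow_nonneg (by linarith) _),
          ← Real.rpow_mul (by linarith : (0:ℝ) ≤ ε/2), mul_one_div, div_self hp0.ne',
          Real.rpow_one]
      have h4 : (2:ℝ) ^ (1/p) ≤ 2 := by
        have := Real.rpow_le_rpow_of_exponent_le one_le_two
          (show 1/p ≤ 1 by rw [div_le_one hp0]; exact hp)
        rwa [Real.rpow_one] at this
      calc lpNorm p (fun k => w k • z k) ≤ 2 ^ (1/p) * (ε/2) := by rw [← h3]; exact h2
        _ ≤ 2 * (ε/2) := mul_le_mul_of_nonneg_right h4 (by linarith)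
        _ = ε := by ring
    refine ⟨(fun k => w k • z k), hmemz, hlpz, N₂ + N₁, fun n hn => ?_⟩
    have hn1 : N₁ ≤ n := le_trans (Nat.le_add_left _ _) hn
    have hn2 : N₂ ≤ n - N₁ := by omega
    obtain ⟨a, haS, haB, haH, haHead⟩ := hN₂ (n - N₁) hn2
    have hxn : x' (n - N₁) = x n := by
      rw [hx']
      dsimp only
      rw [Nat.sub_add_cancel hn1]
    have hm0 : (0:ℝ) < min s 8 := lt_min hspos (by norm_num)
    have hble : ∀ k, |a k / w k| ^ r ≤ |a k| ^ r / (min s 8) ^ r := by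
      intro k
      rw [abs_div, abs_of_pos (hwpos k), Real.div_rpow (abs_nonneg _) (hwpos k).le]
      apply div_le_div_of_nonneg_left (Real.rpow_nonneg (abs_nonneg _) _)
        (Real.rpow_pos_of_pos hm0 _)
      exact Real.rpow_le_rpow hm0.le (min_le_iff.2 (by
        rw [hw]; dsimp only; split
        · exact Or.inl le_rfl
        · exact Or.inr le_rfl)) hr0.le
    have hbsum : Summable (fun k => |a k / w k| ^ r) := by
      apply Summable.of_nonneg_of_le (fun k => Real.rpow_nonneg (abs_nonneg _) _) hble
      exact haS.div_const _
    have hbtot : (∑' k, |a k / w k| ^ r) ≤ 1 := by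
      rw [← Summable.sum_add_tsum_nat_add M hbsum]
      have hheadb : (∑ k ∈ Finset.range M, |a k / w k| ^ r) ≤ (M:ℝ) * (1 / c2) := by
        have h1 : ∀ k ∈ Finset.range M, |a k / w k| ^ r ≤ 1 / c2 := by
          intro k hk
          have hkM := Finset.mem_range.1 hk
          have hwk : w k = s := by rw [hw]; simp [hkM]
          rw [← hδs, hwk, abs_div, abs_of_pos hspos]
          apply Real.rpow_le_rpow (by positivity) _ hr0.le
          exact (div_le_div_iff_of_pos_right hspos).2 (haHead k hkM)
        calc (∑ k ∈ Finset.range M, |a k / w k| ^ r)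
            ≤ (Finset.range M).card • (1 / c2) := Finset.sum_le_card_nsmul _ _ _ h1
          _ = (M:ℝ) * (1 / c2) := by rw [Finset.card_range, nsmul_eq_mul]
      have hheadb2 : (M:ℝ) * (1 / c2) ≤ 1/2 := by
        rw [mul_one_div, div_le_div_iff₀ hc2pos (by norm_num : (0:ℝ) < 2), hc2]
        linarith
      have htailb : (∑' k, |a (k+M) / w (k+M)| ^ r) ≤ 1/2 := by
        have h2 : (fun k => |a (k+M) / w (k+M)| ^ r) = fun k => |a (k+M)| ^ r / 8 ^ r := by
          funext k
          have hwk : w (k+M) = 8 := by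
            rw [hw]; simp [Nat.not_lt.2 (Nat.le_add_left M k)]
          rw [hwk, abs_div, abs_of_pos (by norm_num : (0:ℝ) < 8),
            Real.div_rpow (abs_nonneg _) (by norm_num)]
        rw [h2, tsum_div_const]
        have h3 : (∑' k, |a (k+M)| ^ r) ≤ (4:ℝ) ^ r :=
          le_trans (tail_tsum_le haS (fun k => Real.rpow_nonneg (abs_nonneg _) _) M) haB
        have h4 : (4:ℝ) ^ r / 8 ^ r = ((1:ℝ)/2) ^ r := by
          rw [← Real.div_rpow (by norm_num) (by norm_num)]
          norm_num
        have h5 : ((1:ℝ)/2) ^ r ≤ 1/2 := by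
          have h6 := Real.rpow_le_rpow_of_exponent_ge (by norm_num : (0:ℝ) < 1/2)
            (by norm_num) hr
          rwa [Real.rpow_one] at h6
        calc (∑' k, |a (k+M)| ^ r) / 8 ^ r ≤ (4:ℝ) ^ r / 8 ^ r :=
            (div_le_div_iff_of_pos_right (Real.rpow_pos_of_pos (by norm_num) _)).2 h3
          _ ≤ 1/2 := by rw [h4]; exact h5
      linarith
    have hfeq : (fun k => (a k / w k) • (w k • z k)) = fun k => a k • z k := by
      funext k
      rw [smul_smul, div_mul_cancel₀ _ (hwpos k).ne']
    refine ⟨fun k => a k / w k, hbsum, hbtot, ?_⟩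
    rw [hfeq, ← hxn]
    exact haH

/-- A sequence is `(p,r)`-null iff for every `ε > 0` there are `z ∈ ℓ_p(X)` and `N` such
that `‖xₙ‖ ≤ ε` and `xₙ ∈ (p,r)-conv(z)` for all `n ≥ N`. -/
theorem prNull_iff [CompleteSpace X] (p r : ℝ) (hp : 1 ≤ p) (hr : 1 ≤ r)
    (hpr : 1 ≤ 1 / p + 1 / r) (x : ℕ → X) :
    IsPRNull p r x ↔
      ∀ ε > 0, ∃ z : ℕ → X, MemLpSeq p z ∧ ∃ N : ℕ, ∀ n ≥ N,
        ‖x n‖ ≤ ε ∧ x n ∈ prConv r z :=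
  prNull_iff' p r hp hr hpr x
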